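/- (Proposition 1.) Fix r > 0 and let x* be the unique positive solution of tanh(1/x) = x. Then there exists θ > 0 such that the saddle-point equation c = ( 1 + exp( θ/(1+rθc) ) )^{−1} has at least two distinct solutions c in the interval (0,1) if and only if r > r_cp := (x*)²/(1−(x*)²). -/

import Mathlib

open Real Set Filter Topology

noncomputable def Lf (c : ℝ) : ℝ := Real.log (1 - c) - Real.log c
noncomputable def gf (r c : ℝ) : ℝ := (Lf c)⁻¹ - r * c
noncomputable def hf (c : ℝ) : ℝ := c * (1 - c) * (Lf c) ^ 2
noncomputable def kf (c : ℝ) : ℝ := (1 - 2 * c) * Lf c - 2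

lemma Lf_pos {c : ℝ} (h0 : 0 < c) (h2 : c < 1 / 2) : 0 < Lf c :=
  sub_pos.2 (Real.log_lt_log h0 (by linarith))

lemma hf_pos {c : ℝ} (h0 : 0 < c) (h2 : c < 1 / 2) : 0 < hf c := by
  have hL := Lf_pos h0 h2
  have hL2 : (0:ℝ) < (Lf c)^2 := by positivity
  have h1 : (0:ℝ) < 1 - c := by linarith
  exact mul_pos (mul_pos h0 h1) hL2

lemma hasDerivAt_Lf {c : ℝ} (h0 : 0 < c) (h1 : c < 1) :
    HasDerivAt Lf (-(1 - c)⁻¹ - c⁻¹) c := by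
  have h1' : (1 : ℝ) - c ≠ 0 := by linarith
  have hA : HasDerivAt (fun c : ℝ => Real.log (1 - c)) (-(1 - c)⁻¹) c := by
    have := (Real.hasDerivAt_log h1').comp c ((hasDerivAt_id c).const_sub 1)
    simpa [Function.comp_def] using this.congr_deriv (by ring)
  exact hA.sub (Real.hasDerivAt_log (ne_of_gt h0))

lemma hasDerivAt_gf (r : ℝ) {c : ℝ} (h0 : 0 < c) (h2 : c < 1 / 2) :
    HasDerivAt (gf r) ((hf c)⁻¹ - r) c := by
  have hL := Lf_pos h0 h2
  have h := ((hasDerivAt_Lf h0 (by linarith)).inv (ne_of_gt hL)).sub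
    ((hasDerivAt_id c).const_mul r)
  have he : -(-(1 - c)⁻¹ - c⁻¹) / Lf c ^ 2 - r * 1 = (hf c)⁻¹ - r := by
    unfold hf
    have h1' : (1:ℝ) - c ≠ 0 := by linarith
    field_simp
    ring
  simpa [gf] using he ▸ h

lemma hasDerivAt_hf {c : ℝ} (h0 : 0 < c) (h1 : c < 1) :
    HasDerivAt hf (Lf c * kf c) c := by
  have hL := hasDerivAt_Lf h0 h1
  have h := (((hasDerivAt_id c).mul ((hasDerivAt_id c).const_sub 1)).mul (hL.pow 2))
  have he : (1 * (1 - c) + c * -1) * Lf c ^ 2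
      + c * (1 - c) * (2 * Lf c ^ 1 * (-(1 - c)⁻¹ - c⁻¹)) = Lf c * kf c := by
    have h1' : (1:ℝ) - c ≠ 0 := by linarith
    unfold kf
    field_simp
    ring
  simpa [hf] using he ▸ h

lemma hasDerivAt_kf {c : ℝ} (h0 : 0 < c) (h1 : c < 1) :
    HasDerivAt kf (-2 * Lf c + (1 - 2 * c) * (-(1 - c)⁻¹ - c⁻¹)) c := by
  have h := (((hasDerivAt_id c).const_mul 2).const_sub 1).mul (hasDerivAt_Lf h0 h1)
  have h2 := h.sub_const 2
  have hfun : (fun x => (1 - 2 * id x) * Lf x - 2) = kf := by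
    funext x; simp [kf]
  rw [show (fun x => ((fun x : ℝ => 1 - 2 * id x) * Lf) x - 2) = kf from hfun] at h2
  exact h2.congr_deriv (by simp)

lemma kf_strictAnti : StrictAntiOn kf (Ioo (0:ℝ) (1/2)) := by
  apply strictAntiOn_of_deriv_neg (convex_Ioo _ _)
  · intro x hx
    exact (hasDerivAt_kf hx.1 (by linarith [hx.2])).continuousAt.continuousWithinAt
  · intro x hx
    rw [interior_Ioo] at hx
    rw [(hasDerivAt_kf hx.1 (by linarith [hx.2])).deriv]
    have hL := Lf_pos hx.1 hx.2
    have h1 : (0:ℝ) < 1 - x := by linarith [hx.2]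
    have hi1 : (0:ℝ) < (1-x)⁻¹ := inv_pos.2 h1
    have hi2 : (0:ℝ) < x⁻¹ := inv_pos.2 hx.1
    have h2 : (0:ℝ) < 1 - 2*x := by linarith [hx.2]
    nlinarith [mul_pos h2 (add_pos hi1 hi2)]

lemma gf_contOn (r : ℝ) {p q : ℝ} (hp : 0 < p) (hq : q < 1/2) :
    ContinuousOn (gf r) (Icc p q) := fun x hx =>
  ((hasDerivAt_gf r (lt_of_lt_of_le hp hx.1)
    (lt_of_le_of_lt hx.2 hq)).continuousAt).continuousWithinAt

/-- Characterization of the saddle-point equation in terms of `gf`. -/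
lemma sol_iff (r θ c : ℝ) (hr : 0 < r) (hθ : 0 < θ) (hc : c ∈ Ioo (0:ℝ) 1) :
    c = (1 + Real.exp (θ / (1 + r * θ * c)))⁻¹ ↔ (c < 1/2 ∧ gf r c = θ⁻¹) := by
  obtain ⟨hc0, hc1⟩ := hc
  have hden : 0 < 1 + r * θ * c := by positivity
  set u := θ / (1 + r * θ * c) with hu
  have hu0 : 0 < u := div_pos hθ hden
  constructor
  · intro h
    have hexp1 : (0:ℝ) < 1 + Real.exp u := by positivity
    have hce : c * (1 + Real.exp u) = 1 := by
      rw [h]; field_simp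
    have h1e : 1 < Real.exp u := by
      nlinarith [Real.add_one_lt_exp (ne_of_gt hu0)]
    have hc2 : c < 1/2 := by nlinarith
    have h1c : 0 < 1 - c := by linarith
    have hec : Real.exp u = (1 - c) / c := by
      rw [eq_div_iff (ne_of_gt hc0)]; nlinarith
    have hLu : Lf c = u := by
      unfold Lf
      rw [← Real.log_div (ne_of_gt h1c) (ne_of_gt hc0), ← hec, Real.log_exp]
    refine ⟨hc2, ?_⟩
    unfold gf
    rw [hLu, hu]
    field_simp
    try ring
  · rintro ⟨hc2, hg⟩
    have hL := Lf_pos hc0 hc2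
    have h1c : 0 < 1 - c := by linarith
    have hLe : Lf c = u := by
      have h1 : (Lf c)⁻¹ = θ⁻¹ + r * c := by
        have h4 : gf r c = θ⁻¹ := hg
        unfold gf at h4; linarith
      have hmul : (θ⁻¹ + r * c) * u = 1 := by
        rw [hu]
        field_simp
        try ring
      have h5 : (θ⁻¹ + r * c)⁻¹ = u := inv_eq_of_mul_eq_one_right hmul
      rw [← h5, ← h1, inv_inv]
    have hexp : Real.exp u = (1 - c) / c := by
      rw [← hLe]; unfold Lf
      rw [Real.exp_sub, Real.exp_log h1c, Real.exp_log hc0]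
    rw [hexp]
    have h3 : 1 + (1 - c) / c = c⁻¹ := by field_simp; ring
    rw [h3, inv_inv]

lemma tendsto_Lf_top : Tendsto Lf (𝓝[>] (0:ℝ)) atTop := by
  have h1 : Tendsto (fun c : ℝ => Real.log (1 - c)) (𝓝[>] (0:ℝ)) (𝓝 0) := by
    have hc : ContinuousAt (fun c : ℝ => Real.log (1 - c)) 0 :=
      ((continuous_const.sub continuous_id).continuousAt).log (by norm_num)
    have hc' : Tendsto (fun c : ℝ => Real.log (1 - c)) (𝓝 (0:ℝ))
        (𝓝 (Real.log (1 - 0))) := hc.tendsto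
    have := hc'.mono_left (nhdsWithin_le_nhds (s := Ioi (0:ℝ)))
    simpa using this
  have h2 : Tendsto (fun c : ℝ => -Real.log c) (𝓝[>] (0:ℝ)) atTop :=
    tendsto_neg_atBot_atTop.comp Real.tendsto_log_nhdsGT_zero
  show Tendsto (fun c => Real.log (1 - c) - Real.log c) (𝓝[>] (0:ℝ)) atTop
  simpa [Lf, sub_eq_add_neg] using h1.add_atTop h2

lemma tendsto_gf_zero (r : ℝ) : Tendsto (fun c => gf r c) (𝓝[>] (0:ℝ)) (𝓝 0) := by
  have h1 : Tendsto (fun c : ℝ => (Lf c)⁻¹) (𝓝[>] (0:ℝ)) (𝓝 0) :=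
    tendsto_Lf_top.inv_tendsto_atTop
  have h2 : Tendsto (fun c : ℝ => r * c) (𝓝[>] (0:ℝ)) (𝓝 0) := by
    have h2' : Tendsto (fun c : ℝ => r * c) (𝓝 (0:ℝ)) (𝓝 (r * 0)) :=
      (continuous_const.mul continuous_id).tendsto 0
    have := h2'.mono_left (nhdsWithin_le_nhds (s := Ioi (0:ℝ)))
    simpa using this
  simpa [gf] using h1.sub h2

lemma eventually_gf_pos (r : ℝ) (hr : 0 < r) : ∀ᶠ c in 𝓝[>] (0:ℝ), 0 < gf r c := by
  have hcl : Tendsto (fun c : ℝ => c * Lf c) (𝓝[>] (0:ℝ)) (𝓝 0) := by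
    have h1 : Tendsto (fun c : ℝ => c * Real.log (1 - c)) (𝓝[>] (0:ℝ)) (𝓝 0) := by
      have hc : ContinuousAt (fun c : ℝ => c * Real.log (1 - c)) 0 :=
        continuousAt_id.mul (((continuous_const.sub continuous_id).continuousAt).log
          (by norm_num))
      have hc' : Tendsto (fun c : ℝ => c * Real.log (1 - c)) (𝓝 (0:ℝ))
          (𝓝 (0 * Real.log (1 - 0))) := hc.tendsto
      have := hc'.mono_left (nhdsWithin_le_nhds (s := Ioi (0:ℝ)))
      simpa using this
    have h2 : Tendsto (fun c : ℝ => c * Real.log c) (𝓝[>] (0:ℝ)) (𝓝 0) := by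
      have h2' : Tendsto (fun c : ℝ => c * Real.log c) (𝓝 (0:ℝ)) (𝓝 0) := by
        have := Real.continuous_mul_log.tendsto 0
        simpa using this
      exact h2'.mono_left (nhdsWithin_le_nhds (s := Ioi (0:ℝ)))
    simpa [Lf, mul_sub] using h1.sub h2
  have hsmall : ∀ᶠ c in 𝓝[>] (0:ℝ), c * Lf c < r⁻¹ :=
    hcl.eventually (eventually_lt_nhds (by positivity))
  have hLpos : ∀ᶠ c in 𝓝[>] (0:ℝ), 0 < Lf c :=
    tendsto_Lf_top.eventually (eventually_gt_atTop 0)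
  filter_upwards [hsmall, hLpos] with c h1 h2
  have key : gf r c = (1 - r * (c * Lf c)) / Lf c := by
    unfold gf
    rw [eq_div_iff (ne_of_gt h2), sub_mul, inv_mul_cancel₀ (ne_of_gt h2)]
    ring
  rw [key]
  apply div_pos _ h2
  have h3 := mul_lt_mul_of_pos_left h1 hr
  rw [mul_inv_cancel₀ (ne_of_gt hr)] at h3
  linarith

lemma tendsto_gf_half (r : ℝ) : Tendsto (fun c => gf r c) (𝓝[<] (1/2:ℝ)) atTop := by
  have hL0 : Tendsto Lf (𝓝[<] (1/2:ℝ)) (𝓝[>] (0:ℝ)) := by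
    rw [tendsto_nhdsWithin_iff]
    constructor
    · have hcL : ContinuousAt Lf (1/2:ℝ) :=
        ContinuousAt.sub (((continuous_const.sub continuous_id).continuousAt).log
          (by norm_num)) ((continuousAt_id).log (by norm_num))
      have hv : Lf (1/2:ℝ) = 0 := by unfold Lf; norm_num
      have hcL' : Tendsto Lf (𝓝 (1/2:ℝ)) (𝓝 (Lf (1/2:ℝ))) := hcL.tendsto
      have := hcL'.mono_left (nhdsWithin_le_nhds (s := Iio (1/2:ℝ)))
      rwa [hv] at this
    · have hm : Ioo (0:ℝ) (1/2) ∈ 𝓝[<] (1/2:ℝ) := Ioo_mem_nhdsLT (by norm_num)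
      filter_upwards [hm] with c hc
      exact Lf_pos hc.1 hc.2
  have h1 : Tendsto (fun c : ℝ => (Lf c)⁻¹) (𝓝[<] (1/2:ℝ)) atTop :=
    tendsto_inv_nhdsGT_zero.comp hL0
  have h2 : Tendsto (fun c : ℝ => -(r * c)) (𝓝[<] (1/2:ℝ)) (𝓝 (-(r * (1/2)))) := by
    have h2' : Tendsto (fun c : ℝ => -(r * c)) (𝓝 (1/2:ℝ)) (𝓝 (-(r * (1/2)))) :=
      (continuous_const.mul continuous_id).neg.tendsto _
    exact h2'.mono_left (nhdsWithin_le_nhds (s := Iio (1/2:ℝ)))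
  simpa [gf, sub_eq_add_neg] using h1.atTop_add h2

lemma four_points (r v : ℝ) (hr : 0 < r) (hv : 0 < v) {p1 p2 p3 p4 : ℝ}
    (h01 : 0 < p1) (h12 : p1 < p2) (h23 : p2 < p3) (h34 : p3 < p4) (h4 : p4 < 1/2)
    (hv1 : gf r p1 < v) (hv2 : v < gf r p2) (hv3 : gf r p3 < v) (hv4 : v < gf r p4) :
    ∃ θ : ℝ, 0 < θ ∧ ∃ c₁ c₂ : ℝ,
      c₁ ∈ Set.Ioo (0 : ℝ) 1 ∧ c₂ ∈ Set.Ioo (0 : ℝ) 1 ∧ c₁ ≠ c₂ ∧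
      c₁ = (1 + Real.exp (θ / (1 + r * θ * c₁)))⁻¹ ∧
      c₂ = (1 + Real.exp (θ / (1 + r * θ * c₂)))⁻¹ := by
  have h2half : p2 < 1/2 := by linarith
  obtain ⟨c₁, hc₁, hgc₁⟩ := intermediate_value_Icc h12.le (gf_contOn r h01 h2half)
      ⟨hv1.le, hv2.le⟩
  obtain ⟨c₂, hc₂, hgc₂⟩ := intermediate_value_Icc h34.le
      (gf_contOn r (by linarith) h4) ⟨hv3.le, hv4.le⟩
  have hc₁0 : 0 < c₁ := lt_of_lt_of_le h01 hc₁.1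
  have hc₁2 : c₁ < 1/2 := by linarith [hc₁.2]
  have hc₂0 : 0 < c₂ := by linarith [hc₂.1]
  have hc₂2 : c₂ < 1/2 := lt_of_le_of_lt hc₂.2 h4
  have hθ : (0:ℝ) < v⁻¹ := by positivity
  refine ⟨v⁻¹, hθ, c₁, c₂, ⟨hc₁0, by linarith⟩, ⟨hc₂0, by linarith⟩, ?_, ?_, ?_⟩
  · intro h
    have h5 := hc₁.2
    rw [h] at h5
    linarith [hc₂.1]
  · exact (sol_iff r v⁻¹ c₁ hr hθ ⟨hc₁0, by linarith⟩).2
      ⟨hc₁2, by rw [inv_inv]; exact hgc₁⟩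
  · exact (sol_iff r v⁻¹ c₂ hr hθ ⟨hc₂0, by linarith⟩).2
      ⟨hc₂2, by rw [inv_inv]; exact hgc₂⟩

set_option maxHeartbeats 1200000 in
/-- Proposition 1 of the paper: for fixed `r > 0`, there exists `θ > 0` such that the
saddle-point equation `c = (1 + exp(θ/(1+rθc)))⁻¹` of the `q`-exponential Erdős–Rényi
model has at least two distinct solutions `c ∈ (0,1)` if and only if
`r > r_cp = (x*)²/(1-(x*)²)`, where `x*` is the unique positive solution of
`tanh(1/x) = x`. -/
theorem qER_phase_transition_criterion (r : ℝ) (hr : 0 < r)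
    (xs : ℝ) (hxs : 0 < xs) (hsol : Real.tanh (1 / xs) = xs)
    (huniq : ∀ y : ℝ, 0 < y → Real.tanh (1 / y) = y → y = xs) :
    (∃ θ : ℝ, 0 < θ ∧ ∃ c₁ c₂ : ℝ,
        c₁ ∈ Set.Ioo (0 : ℝ) 1 ∧ c₂ ∈ Set.Ioo (0 : ℝ) 1 ∧ c₁ ≠ c₂ ∧
        c₁ = (1 + Real.exp (θ / (1 + r * θ * c₁)))⁻¹ ∧
        c₂ = (1 + Real.exp (θ / (1 + r * θ * c₂)))⁻¹) ↔
      xs ^ 2 / (1 - xs ^ 2) < r := by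
  clear huniq
  have hch : 0 < Real.cosh (1/xs) := Real.cosh_pos _
  have hsc : Real.sinh (1/xs) = xs * Real.cosh (1/xs) := by
    rw [Real.tanh_eq_sinh_div_cosh, div_eq_iff (ne_of_gt hch)] at hsol
    linarith [hsol]
  rw [Real.sinh_eq, Real.cosh_eq] at hsc
  set E := Real.exp (1/xs) with hE
  set F := Real.exp (-(1/xs)) with hF
  have hEpos : 0 < E := Real.exp_pos _
  have hFpos : 0 < F := Real.exp_pos _
  have hEF : E * F = 1 := by rw [hE, hF, ← Real.exp_add]; simp
  have h1 : E - F = xs * (E + F) := by linear_combination 2 * hsc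
  have hxs1 : xs < 1 := by nlinarith
  have h1xs : 0 < 1 - xs := by linarith
  have h1xs2 : 0 < 1 - xs^2 := by nlinarith
  have hE2 : Real.exp (2/xs) = (1+xs)/(1-xs) := by
    rw [show (2:ℝ)/xs = 1/xs + 1/xs by ring, Real.exp_add, ← hE,
      eq_div_iff (ne_of_gt h1xs)]
    linear_combination E * h1 + (1 + xs) * hEF
  set cs := (1 - xs)/2 with hcs
  have hcs0 : 0 < cs := by rw [hcs]; linarith
  have hcs2 : cs < 1/2 := by rw [hcs]; linarith
  have h1cs : (1:ℝ) - cs = (1+xs)/2 := by rw [hcs]; ring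
  have hLcs : Lf cs = 2/xs := by
    unfold Lf
    rw [h1cs, hcs]
    rw [← Real.log_div (ne_of_gt (by linarith : (0:ℝ) < (1+xs)/2))
      (ne_of_gt (by linarith : (0:ℝ) < (1-xs)/2))]
    have hq : ((1+xs)/2) / ((1-xs)/2) = (1+xs)/(1-xs) := by
      rw [div_div_div_comm]; norm_num
    rw [hq, ← hE2, Real.log_exp]
  have hkcs : kf cs = 0 := by
    have h2cs : 1 - 2*cs = xs := by rw [hcs]; ring
    unfold kf
    rw [hLcs, h2cs]
    field_simp; ring
  have hhcs : hf cs = (1 - xs^2)/xs^2 := by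
    unfold hf
    rw [hLcs, h1cs, hcs]
    field_simp
    ring
  have hfcs_pos : 0 < hf cs := hf_pos hcs0 hcs2
  have hinv : (hf cs)⁻¹ = xs^2/(1-xs^2) := by rw [hhcs, inv_div]
  have hcsmem : cs ∈ Ioo (0:ℝ) (1/2) := ⟨hcs0, hcs2⟩
  have hmono : StrictMonoOn hf (Ioc (0:ℝ) cs) := by
    apply strictMonoOn_of_deriv_pos (convex_Ioc _ _)
    · intro x hx
      exact (hasDerivAt_hf hx.1 (by linarith [hx.2])).continuousAt.continuousWithinAt
    · intro x hx
      rw [interior_Ioc] at hx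
      have hx2 : x < 1/2 := lt_trans hx.2 hcs2
      rw [(hasDerivAt_hf hx.1 (by linarith)).deriv]
      have hk : 0 < kf x := by
        have := kf_strictAnti ⟨hx.1, hx2⟩ hcsmem hx.2
        rwa [hkcs] at this
      exact mul_pos (Lf_pos hx.1 hx2) hk
  have hanti : StrictAntiOn hf (Ico cs (1/2:ℝ)) := by
    apply strictAntiOn_of_deriv_neg (convex_Ico _ _)
    · intro x hx
      have hx0 : 0 < x := lt_of_lt_of_le hcs0 hx.1
      exact (hasDerivAt_hf hx0 (by linarith [hx.2])).continuousAt.continuousWithinAt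
    · intro x hx
      rw [interior_Ico] at hx
      have hx0 : 0 < x := lt_trans hcs0 hx.1
      rw [(hasDerivAt_hf hx0 (by linarith [hx.2])).deriv]
      have hk : kf x < 0 := by
        have := kf_strictAnti hcsmem ⟨hx0, hx.2⟩ hx.1
        rwa [hkcs] at this
      exact mul_neg_of_pos_of_neg (Lf_pos hx0 hx.2) hk
  have hmax : ∀ c ∈ Ioo (0:ℝ) (1/2), c ≠ cs → hf c < hf cs := by
    intro c hc hne
    rcases lt_or_gt_of_ne hne with h | h
    · exact hmono ⟨hc.1, h.le⟩ ⟨hcs0, le_rfl⟩ h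
    · exact hanti ⟨le_rfl, hcs2⟩ ⟨h.le, hc.2⟩ h
  constructor
  · rintro ⟨θ, hθ, c₁, c₂, hc₁, hc₂, hne, e₁, e₂⟩
    by_contra hle
    push_neg at hle
    obtain ⟨h2c₁, hg₁⟩ := (sol_iff r θ c₁ hr hθ hc₁).1 e₁
    obtain ⟨h2c₂, hg₂⟩ := (sol_iff r θ c₂ hr hθ hc₂).1 e₂
    have key : ∀ x ∈ Ioo (0:ℝ) (1/2), x ≠ cs → 0 < (hf x)⁻¹ - r := by
      intro x hx hxne
      have h1' : hf x < hf cs := hmax x hx hxne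
      have hfx : 0 < hf x := hf_pos hx.1 hx.2
      have h3 : (hf cs)⁻¹ < (hf x)⁻¹ := inv_strictAnti₀ hfx h1'
      rw [hinv] at h3
      linarith
    have gmono1 : StrictMonoOn (gf r) (Ioc (0:ℝ) cs) := by
      apply strictMonoOn_of_deriv_pos (convex_Ioc _ _)
      · intro x hx
        exact (hasDerivAt_gf r hx.1
          (lt_of_le_of_lt hx.2 hcs2)).continuousAt.continuousWithinAt
      · intro x hx
        rw [interior_Ioc] at hx
        rw [(hasDerivAt_gf r hx.1 (lt_trans hx.2 hcs2)).deriv]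
        exact key x ⟨hx.1, lt_trans hx.2 hcs2⟩ (ne_of_lt hx.2)
    have gmono2 : StrictMonoOn (gf r) (Ico cs (1/2:ℝ)) := by
      apply strictMonoOn_of_deriv_pos (convex_Ico _ _)
      · intro x hx
        exact (hasDerivAt_gf r (lt_of_lt_of_le hcs0 hx.1)
          hx.2).continuousAt.continuousWithinAt
      · intro x hx
        rw [interior_Ico] at hx
        have hx0 : 0 < x := lt_trans hcs0 hx.1
        rw [(hasDerivAt_gf r hx0 hx.2).deriv]
        exact key x ⟨hx0, hx.2⟩ (ne_of_gt hx.1)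
    have gmono : StrictMonoOn (gf r) (Ioo (0:ℝ) (1/2)) := by
      intro x hx y hy hxy
      rcases le_or_gt y cs with h | h
      · exact gmono1 ⟨hx.1, (hxy.trans_le h).le⟩ ⟨hy.1, h⟩ hxy
      · rcases le_or_gt cs x with h' | h'
        · exact gmono2 ⟨h', hx.2⟩ ⟨h.le, hy.2⟩ hxy
        · exact lt_trans (gmono1 ⟨hx.1, h'.le⟩ ⟨hcs0, le_rfl⟩ h')
            (gmono2 ⟨le_rfl, hcs2⟩ ⟨h.le, hy.2⟩ h)
    exact hne (gmono.injOn ⟨hc₁.1, h2c₁⟩ ⟨hc₂.1, h2c₂⟩ (by rw [hg₁, hg₂]))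
  · intro hlt
    have hid : (xs^2/(1-xs^2)) * hf cs = 1 := by
      rw [hhcs]
      field_simp
    have h1r : 1 < r * hf cs := by
      have := mul_lt_mul_of_pos_right hlt hfcs_pos
      linarith
    have hev : ∀ᶠ c in 𝓝 cs, 1 < r * hf c := by
      have hcont : ContinuousAt (fun c => r * hf c) cs :=
        continuousAt_const.mul (hasDerivAt_hf hcs0 (by linarith)).continuousAt
      exact hcont.tendsto.eventually (eventually_gt_nhds h1r)
    obtain ⟨ε, hε, hball⟩ := Metric.eventually_nhds_iff.1 hev
    set a := max (cs - ε/2) (cs/2) with haa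
    set b := min (cs + ε/2) (cs/2 + 1/4) with hbb
    have ha0 : 0 < a := by
      rw [haa]; exact lt_of_lt_of_le (by linarith) (le_max_right _ _)
    have hacs : a < cs := by
      rw [haa]; exact max_lt (by linarith) (by linarith)
    have hbcs : cs < b := by
      rw [hbb]; exact lt_min (by linarith) (by linarith)
    have hb2 : b < 1/2 := by
      rw [hbb]; exact lt_of_le_of_lt (min_le_right _ _) (by linarith)
    have hab : a < b := lt_trans hacs hbcs
    have h1d : cs - ε/2 ≤ a := by rw [haa]; exact le_max_left _ _
    have h2d : b ≤ cs + ε/2 := by rw [hbb]; exact min_le_left _ _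
    have hdist : ∀ x ∈ Icc a b, dist x cs < ε := by
      intro x hx
      rw [Real.dist_eq, abs_sub_lt_iff]
      constructor
      · linarith [hx.2]
      · linarith [hx.1]
    have hganti : StrictAntiOn (gf r) (Icc a b) := by
      apply strictAntiOn_of_deriv_neg (convex_Icc _ _)
      · exact gf_contOn r ha0 hb2
      · intro x hx
        rw [interior_Icc] at hx
        have hx0 : 0 < x := lt_trans ha0 hx.1
        have hx2 : x < 1/2 := lt_trans hx.2 hb2
        rw [(hasDerivAt_gf r hx0 hx2).deriv]
        have hbx : 1 < r * hf x := hball (hdist x ⟨hx.1.le, hx.2.le⟩)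
        have hfx : 0 < hf x := hf_pos hx0 hx2
        nlinarith [inv_mul_cancel₀ (ne_of_gt hfx), hfx, hbx]
    have hgval : gf r b < gf r a := hganti ⟨le_rfl, hab.le⟩ ⟨hab.le, le_rfl⟩ hab
    rcases lt_or_ge 0 (gf r a) with hMa | hMa
    · set v := (max (gf r b) 0 + gf r a)/2 with hv
      have hmaxlt : max (gf r b) 0 < gf r a := max_lt hgval hMa
      have hv0 : 0 < v := by rw [hv]; linarith [le_max_right (gf r b) 0]
      have hvA : v < gf r a := by rw [hv]; linarith
      have hvb : gf r b < v := by rw [hv]; linarith [le_max_left (gf r b) 0]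
      obtain ⟨p1, hp1v, hp1m⟩ := (((tendsto_gf_zero r).eventually
        (eventually_lt_nhds hv0)).and
        (eventually_of_mem (Ioo_mem_nhdsGT ha0) (fun x hx => hx))).exists
      obtain ⟨p4, hp4v, hp4m⟩ := (((tendsto_gf_half r).eventually
        (eventually_gt_atTop v)).and
        (eventually_of_mem (Ioo_mem_nhdsLT hb2) (fun x hx => hx))).exists
      exact four_points r v hr hv0 hp1m.1 hp1m.2 hab hp4m.1 hp4m.2 hp1v hvA hvb hp4v
    · obtain ⟨c₀, hc₀p, hc₀m⟩ := ((eventually_gf_pos r hr).and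
        (eventually_of_mem (Ioo_mem_nhdsGT ha0) (fun x hx => hx))).exists
      set v := gf r c₀ / 2 with hv
      have hv0 : 0 < v := by rw [hv]; linarith
      obtain ⟨p1, hp1v, hp1m⟩ := (((tendsto_gf_zero r).eventually
        (eventually_lt_nhds hv0)).and
        (eventually_of_mem (Ioo_mem_nhdsGT hc₀m.1) (fun x hx => hx))).exists
      obtain ⟨p4, hp4v, hp4m⟩ := (((tendsto_gf_half r).eventually
        (eventually_gt_atTop v)).and
        (eventually_of_mem (Ioo_mem_nhdsLT hb2) (fun x hx => hx))).exists
      have hvc₀ : v < gf r c₀ := by rw [hv]; linarith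
      have hvb : gf r b < v := by linarith
      exact four_points r v hr hv0 hp1m.1 hp1m.2 (lt_trans hc₀m.2 hab)
        hp4m.1 hp4m.2 hp1v hvc₀ hvb hp4v
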